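/- arXiv:0903.1742 — 2 statements merged into one kernel-verified Lean document; each statement's English description precedes it below -/
import Mathlib

section
/- For every positive integer r, every h ∈ {0,1}, and every complex number z ≠ 0, one has A_{r,0}(z)·B_{r+h,1}(z) − A_{r+h,1}(z)·B_{r,0}(z) ≠ 0. -/
/-- The generalized binomial coefficient `C(α, m) = α(α-1)⋯(α-m+1)/m!`. -/
noncomputable def genChoose (α : ℝ) (m : ℕ) : ℝ :=
  (∏ i ∈ Finset.range m, (α - i)) / m.factorial

/-- The polynomial `A_{r,g}(z) = Σ_{m=0}^{r} C(r-g+1/4, m) C(2r-g-m, r-g) (-z)^m`. -/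
noncomputable def Apoly (r g : ℕ) (z : ℂ) : ℂ :=
  ∑ m ∈ Finset.range (r + 1),
    ((genChoose ((r : ℝ) - g + 1/4) m *
      genChoose (2 * (r : ℝ) - g - m) (r - g) : ℝ) : ℂ) * (-z) ^ m

/-- The polynomial `B_{r,g}(z) = Σ_{m=0}^{r-g} C(r-1/4, m) C(2r-g-m, r) (-z)^m`. -/
noncomputable def Bpoly (r g : ℕ) (z : ℂ) : ℂ :=
  ∑ m ∈ Finset.range (r - g + 1),
    ((genChoose ((r : ℝ) - 1/4) m *
      genChoose (2 * (r : ℝ) - g - m) r : ℝ) : ℂ) * (-z) ^ m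

lemma gc_succ (α : ℝ) (m : ℕ) :
    genChoose α (m+1) * (m+1) = genChoose α m * (α - m) := by
  unfold genChoose
  rw [Finset.prod_range_succ, Nat.factorial_succ]
  have h1 : (m.factorial : ℝ) ≠ 0 := by positivity
  push_cast; field_simp

lemma gc_diag (α : ℝ) (m : ℕ) :
    genChoose (α+1) (m+1) * (m+1) = genChoose α m * (α+1) := by
  unfold genChoose
  rw [Finset.prod_range_succ', Nat.factorial_succ]
  have h1 : (m.factorial : ℝ) ≠ 0 := by positivity
  have h2 : ∏ i ∈ Finset.range m, (α + 1 - (↑(i+1) : ℝ)) = ∏ i ∈ Finset.range m, (α - i) := by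
    apply Finset.prod_congr rfl; intro i _; push_cast; ring
  rw [h2]; push_cast; field_simp; ring

lemma gc_up (α : ℝ) (m : ℕ) :
    genChoose (α+1) m * (α + 1 - m) = genChoose α m * (α+1) := by
  rcases m with _ | k
  · simp [genChoose]
  · have h1 := gc_succ (α+1) (k+1)
    have h2 := gc_diag α (k+1)
    push_cast at h1 h2 ⊢
    linarith [h1, h2]

lemma gc_nat_zero (n k : ℕ) (h : n < k) : genChoose (n : ℝ) k = 0 := by
  unfold genChoose
  rw [Finset.prod_eq_zero (Finset.mem_range.mpr h) (by simp)]
  simp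

lemma gc_self (n : ℕ) : genChoose (n : ℝ) n = 1 := by
  induction n with
  | zero => simp [genChoose]
  | succ k ih =>
    have h := gc_diag (k : ℝ) k
    rw [ih] at h
    push_cast at h ⊢
    have hk : (k : ℝ) + 1 ≠ 0 := by positivity
    field_simp at h
    linarith [h]

noncomputable def c10 (r m : ℕ) : ℝ :=
  genChoose ((r:ℝ) + 1/4) m * genChoose (2*(r:ℝ) - m) r
noncomputable def c11 (r m : ℕ) : ℝ :=
  genChoose ((r:ℝ) - 1 + 1/4) m * genChoose (2*(r:ℝ) - 1 - m) (r-1)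
noncomputable def d0 (r m : ℕ) : ℝ :=
  genChoose ((r:ℝ) - 1/4) m * genChoose (2*(r:ℝ) - m) r
noncomputable def d1 (r m : ℕ) : ℝ :=
  genChoose ((r:ℝ) - 1/4) m * genChoose (2*(r:ℝ) - 1 - m) r

-- extension lemmas
lemma c10_ext (r : ℕ) (hr : 1 ≤ r) : c10 r (r+1) = 0 := by
  unfold c10
  rw [show 2*(r:ℝ) - ↑(r+1) = ((r-1 : ℕ) : ℝ) by push_cast [Nat.cast_sub hr]; ring]
  rw [gc_nat_zero (r-1) r (by omega)]
  ring

lemma d1_ext (r : ℕ) (hr : 1 ≤ r) : d1 r r = 0 := by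
  unfold d1
  rw [show 2*(r:ℝ) - 1 - (r:ℕ) = ((r-1 : ℕ) : ℝ) by push_cast [Nat.cast_sub hr]; ring]
  rw [gc_nat_zero (r-1) r (by omega)]
  ring

-- K1a
lemma gc_zero (α : ℝ) : genChoose α 0 = 1 := by simp [genChoose]

lemma K1a (r : ℕ) : ((r:ℝ)+1) * c11 (r+1) 0 = (2*r+1) * c10 r 0 := by
  unfold c10 c11
  simp only [Nat.add_sub_cancel, Nat.cast_zero, gc_zero]
  have h := gc_up (2*(r:ℝ)) r
  rw [show 2*(r:ℝ)+1-(r:ℕ) = (r:ℝ)+1 by push_cast; ring] at h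
  push_cast
  rw [show 2*((r:ℝ)+1)-1-0 = 2*(r:ℝ)+1 by ring, show 2*(r:ℝ)-0 = 2*(r:ℝ) by ring]
  linear_combination h

lemma K1b (r k : ℕ) (hr : 1 ≤ r) (hk : k ≤ r) :
    ((r:ℝ)+1) * c11 (r+1) (k+1) = (2*r+1) * c10 r (k+1) + ((4*r+1)/4) * c11 r k := by
  unfold c10 c11
  simp only [Nat.add_sub_cancel]
  push_cast
  rw [show (r:ℝ)+1-1+1/4 = (r:ℝ)+1/4 by ring,
      show 2*((r:ℝ)+1)-1-((k:ℝ)+1) = 2*(r:ℝ)-(k:ℝ) by ring,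
      show 2*(r:ℝ)-((k:ℝ)+1) = 2*(r:ℝ)-(k:ℝ)-1 by ring,
      show 2*(r:ℝ)-1-(k:ℝ) = 2*(r:ℝ)-(k:ℝ)-1 by ring]
  set P := genChoose ((r:ℝ)+1/4) (k+1) with hP
  set X := genChoose (2*(r:ℝ)-(k:ℝ)) r with hX
  set Q := genChoose (2*(r:ℝ)-(k:ℝ)-1) r with hQ
  set Y := genChoose ((r:ℝ)-1+1/4) k with hY
  set Z := genChoose (2*(r:ℝ)-(k:ℝ)-1) (r-1) with hZ
  -- relations
  have h1 := gc_up (2*(r:ℝ)-(k:ℝ)-1) r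
  rw [show 2*(r:ℝ)-(k:ℝ)-1+1 = 2*(r:ℝ)-(k:ℝ) by ring] at h1
  rw [show 2*(r:ℝ)-(k:ℝ)-(r:ℕ) = (r:ℝ)-(k:ℝ) by push_cast; ring] at h1
  -- h1 : X * (r-k) = Q * (2r-k)
  have h2 := gc_diag ((r:ℝ)-1+1/4) k
  rw [show (r:ℝ)-1+1/4+1 = (r:ℝ)+1/4 by ring] at h2
  -- h2 : P * (k+1) = Y * (r+1/4)
  have h3 := gc_succ (2*(r:ℝ)-(k:ℝ)-1) (r-1)
  rw [show r-1+1 = r by omega, Nat.cast_sub hr] at h3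
  push_cast at h3
  rw [show 2*(r:ℝ)-(k:ℝ)-1-((r:ℝ)-1) = (r:ℝ)-(k:ℝ) by ring,
      show ((r:ℝ)-1)+1 = (r:ℝ) by ring] at h3
  -- h3 : Q * r = Z * (r-k)
  rw [← hX, ← hQ] at h1
  rw [← hP, ← hY] at h2
  rw [← hQ, ← hZ] at h3
  rcases eq_or_lt_of_le hk with he | hlt
  · -- k = r
    subst he
    have hQ0 : Q = 0 := by
      rw [hQ, show 2*(k:ℝ)-(k:ℝ)-1 = ((k-1:ℕ):ℝ) by push_cast [Nat.cast_sub hr]; ring]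
      exact gc_nat_zero (k-1) k (by omega)
    have hX1 : X = 1 := by
      rw [hX, show 2*(k:ℝ)-(k:ℝ) = ((k:ℕ):ℝ) by push_cast; ring]
      exact gc_self k
    have hZ1 : Z = 1 := by
      rw [hZ, show 2*(k:ℝ)-(k:ℝ)-1 = ((k-1:ℕ):ℝ) by push_cast [Nat.cast_sub hr]; ring]
      exact gc_self (k-1)
    rw [hQ0, hX1, hZ1]
    push_cast at h2
    linear_combination h2
  · have hrk : (r:ℝ) - (k:ℝ) ≠ 0 := by
      have : (k:ℝ) < r := by exact_mod_cast hlt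
      intro hcon; linarith
    have hq : (r:ℝ) + 1/4 ≠ 0 := by positivity
    have hXe : X = Q * (2*(r:ℝ)-(k:ℝ)) / ((r:ℝ)-(k:ℝ)) := (eq_div_iff hrk).mpr h1
    have hYe : Y = P * ((k:ℝ)+1) / ((r:ℝ)+1/4) := (eq_div_iff hq).mpr (by push_cast at h2 ⊢; linarith [h2])
    have hZe : Z = Q * (r:ℝ) / ((r:ℝ)-(k:ℝ)) := (eq_div_iff hrk).mpr (by linarith [h3])
    rw [hXe, hYe, hZe]
    field_simp
    ring

lemma K1'a (r : ℕ) : ((r:ℝ)+1) * d1 (r+1) 0 = (2*r+1) * d0 r 0 := by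
  unfold d0 d1
  simp only [Nat.cast_zero, gc_zero]
  have h := gc_diag (2*(r:ℝ)) r
  push_cast
  rw [show 2*((r:ℝ)+1)-1-0 = 2*(r:ℝ)+1 by ring, show 2*(r:ℝ)-0 = 2*(r:ℝ) by ring]
  linear_combination h

lemma K1'b (r k : ℕ) :
    ((r:ℝ)+1) * d1 (r+1) (k+1) = (2*r+1) * d0 r (k+1) + ((4*r+1)/4) * d1 r k := by
  unfold d0 d1
  push_cast
  rw [show (r:ℝ)+1-1/4 = (r:ℝ)-1/4+1 by ring,
      show 2*((r:ℝ)+1)-1-((k:ℝ)+1) = 2*(r:ℝ)-(k:ℝ) by ring,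
      show 2*(r:ℝ)-((k:ℝ)+1) = 2*(r:ℝ)-(k:ℝ)-1 by ring,
      show 2*(r:ℝ)-1-(k:ℝ) = 2*(r:ℝ)-(k:ℝ)-1 by ring]
  set X1 := genChoose ((r:ℝ)-1/4+1) (k+1) with hX1
  set X2 := genChoose (2*(r:ℝ)-(k:ℝ)) (r+1) with hX2
  set P := genChoose ((r:ℝ)-1/4) (k+1) with hP
  set Q := genChoose (2*(r:ℝ)-(k:ℝ)-1) r with hQ
  set Y := genChoose ((r:ℝ)-1/4) k with hY
  have hden : (r:ℝ)-(k:ℝ)-1/4 ≠ 0 := by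
    intro hcon
    have h4 : (4*r : ℝ) = 4*(k:ℝ)+1 := by linarith
    have : (4*r : ℕ) = 4*k+1 := by exact_mod_cast h4
    omega
  have hr1 : (r:ℝ)+1 ≠ 0 := by positivity
  have h1 := gc_up ((r:ℝ)-1/4) (k+1)
  push_cast at h1
  rw [show (r:ℝ)-1/4+1-((k:ℝ)+1) = (r:ℝ)-(k:ℝ)-1/4 by ring] at h1
  rw [← hX1, ← hP] at h1
  have h2 := gc_diag (2*(r:ℝ)-(k:ℝ)-1) r
  rw [show 2*(r:ℝ)-(k:ℝ)-1+1 = 2*(r:ℝ)-(k:ℝ) by ring] at h2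
  rw [← hX2, ← hQ] at h2
  have h3 := gc_succ ((r:ℝ)-1/4) k
  rw [show (r:ℝ)-1/4-(k:ℕ) = (r:ℝ)-(k:ℝ)-1/4 by push_cast; ring] at h3
  rw [← hP, ← hY] at h3
  apply mul_right_cancel₀ (mul_ne_zero hden hr1)
  linear_combination (((r:ℝ)+1)^2*X2)*h1 + (((r:ℝ)+1)*((r:ℝ)-1/4+1)*P)*h2
    + ((4*(r:ℝ)+1)/4*((r:ℝ)+1)*Q)*h3

lemma K2a (r : ℕ) (hr : 1 ≤ r) : 4*(r:ℝ) * c10 r 0 = 8*(r:ℝ) * c11 r 0 := by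
  unfold c10 c11
  simp only [Nat.cast_zero, gc_zero]
  have h := gc_diag (2*(r:ℝ)-1) (r-1)
  rw [show r-1+1 = r by omega, Nat.cast_sub hr] at h
  push_cast at h
  rw [show 2*(r:ℝ)-1+1 = 2*(r:ℝ) by ring, show (r:ℝ)-1+1 = (r:ℝ) by ring] at h
  rw [show 2*(r:ℝ)-0 = 2*(r:ℝ) by ring, show 2*(r:ℝ)-1-0 = 2*(r:ℝ)-1 by ring]
  have hr0 : (r:ℝ) ≠ 0 := by positivity
  apply mul_right_cancel₀ hr0
  linear_combination (4*(r:ℝ)) * h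

lemma K2b (r k : ℕ) (hr : 1 ≤ r) (hk : k < r) :
    4*(r:ℝ) * c10 r (k+1) = 8*(r:ℝ) * c11 r (k+1) + (4*(r:ℝ)-1) * c10 (r-1) k := by
  unfold c10 c11
  push_cast [Nat.cast_sub hr]
  rw [show 2*(r:ℝ)-((k:ℝ)+1) = 2*(r:ℝ)-(k:ℝ)-1 by ring,
      show 2*(r:ℝ)-1-((k:ℝ)+1) = 2*(r:ℝ)-(k:ℝ)-2 by ring,
      show 2*((r:ℝ)-1)-(k:ℝ) = 2*(r:ℝ)-(k:ℝ)-2 by ring]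
  set P := genChoose ((r:ℝ)+1/4) (k+1) with hP
  set Q := genChoose (2*(r:ℝ)-(k:ℝ)-1) r with hQ
  set Y1 := genChoose ((r:ℝ)-1+1/4) (k+1) with hY1
  set Y2 := genChoose (2*(r:ℝ)-(k:ℝ)-2) (r-1) with hY2
  set Y3 := genChoose ((r:ℝ)-1+1/4) k with hY3
  have hkr : (k:ℝ) < r := by exact_mod_cast hk
  have hr1 : (1:ℝ) ≤ r := by exact_mod_cast hr
  have hden1 : (r:ℝ)+1/4 ≠ 0 := by positivity
  have hden2 : 2*(r:ℝ)-(k:ℝ)-1 ≠ 0 := by intro hcon; linarith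
  have h1 := gc_up ((r:ℝ)-1+1/4) (k+1)
  push_cast at h1
  rw [show (r:ℝ)-1+1/4+1 = (r:ℝ)+1/4 by ring,
      show (r:ℝ)+1/4-((k:ℝ)+1) = (r:ℝ)-(k:ℝ)-3/4 by ring] at h1
  rw [← hP, ← hY1] at h1
  have h2 := gc_diag ((r:ℝ)-1+1/4) k
  rw [show (r:ℝ)-1+1/4+1 = (r:ℝ)+1/4 by ring] at h2
  rw [← hP, ← hY3] at h2
  have h3 := gc_diag (2*(r:ℝ)-(k:ℝ)-2) (r-1)
  rw [show r-1+1 = r by omega, Nat.cast_sub hr] at h3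
  push_cast at h3
  rw [show 2*(r:ℝ)-(k:ℝ)-2+1 = 2*(r:ℝ)-(k:ℝ)-1 by ring,
      show (r:ℝ)-1+1 = (r:ℝ) by ring] at h3
  rw [← hQ, ← hY2] at h3
  have hY1e : Y1 = P * ((r:ℝ)-(k:ℝ)-3/4) / ((r:ℝ)+1/4) := (eq_div_iff hden1).mpr (by linarith [h1])
  have hY3e : Y3 = P * ((k:ℝ)+1) / ((r:ℝ)+1/4) := (eq_div_iff hden1).mpr (by linarith [h2])
  have hY2e : Y2 = Q * (r:ℝ) / (2*(r:ℝ)-(k:ℝ)-1) := (eq_div_iff hden2).mpr (by linarith [h3])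
  rw [hY1e, hY3e, hY2e]
  have hinv := mul_inv_cancel₀ hden2
  field_simp
  linear_combination (-(4:ℝ)*P*Q*(1+4*r)) * hinv

lemma K2'a (r : ℕ) (hr : 1 ≤ r) : 4*(r:ℝ) * d0 r 0 = 8*(r:ℝ) * d1 r 0 := by
  unfold d0 d1
  simp only [Nat.cast_zero, gc_zero]
  have h := gc_up (2*(r:ℝ)-1) r
  rw [show 2*(r:ℝ)-1+1 = 2*(r:ℝ) by ring,
      show 2*(r:ℝ)-(r:ℕ) = (r:ℝ) by push_cast; ring] at h
  rw [show 2*(r:ℝ)-0 = 2*(r:ℝ) by ring, show 2*(r:ℝ)-1-0 = 2*(r:ℝ)-1 by ring]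
  have hr0 : (r:ℝ) ≠ 0 := by positivity
  apply mul_right_cancel₀ hr0
  linear_combination (4*(r:ℝ)) * h

lemma K2'b (r k : ℕ) (hr : 1 ≤ r) (hk : k < r) :
    4*(r:ℝ) * d0 r (k+1) = 8*(r:ℝ) * d1 r (k+1) + (4*(r:ℝ)-1) * d0 (r-1) k := by
  unfold d0 d1
  push_cast [Nat.cast_sub hr]
  rw [show 2*(r:ℝ)-((k:ℝ)+1) = 2*(r:ℝ)-(k:ℝ)-1 by ring,
      show 2*(r:ℝ)-1-((k:ℝ)+1) = 2*(r:ℝ)-(k:ℝ)-2 by ring,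
      show 2*((r:ℝ)-1)-(k:ℝ) = 2*(r:ℝ)-(k:ℝ)-2 by ring]
  set P := genChoose ((r:ℝ)-1/4) (k+1) with hP
  set Q := genChoose (2*(r:ℝ)-(k:ℝ)-1) r with hQ
  set W := genChoose (2*(r:ℝ)-(k:ℝ)-2) r with hW
  set Y := genChoose ((r:ℝ)-1-1/4) k with hY
  set V := genChoose (2*(r:ℝ)-(k:ℝ)-2) (r-1) with hV
  have hkr : (k:ℝ) < r := by exact_mod_cast hk
  have hr1 : (1:ℝ) ≤ r := by exact_mod_cast hr
  have hden1 : (r:ℝ)-1/4 ≠ 0 := by intro hcon; linarith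
  have hden2 : 2*(r:ℝ)-(k:ℝ)-1 ≠ 0 := by intro hcon; linarith
  have h1 := gc_up (2*(r:ℝ)-(k:ℝ)-2) r
  push_cast at h1
  rw [show 2*(r:ℝ)-(k:ℝ)-2+1 = 2*(r:ℝ)-(k:ℝ)-1 by ring,
      show 2*(r:ℝ)-(k:ℝ)-1-(r:ℝ) = (r:ℝ)-(k:ℝ)-1 by ring] at h1
  rw [← hQ, ← hW] at h1
  have h2 := gc_diag ((r:ℝ)-1-1/4) k
  rw [show (r:ℝ)-1-1/4+1 = (r:ℝ)-1/4 by ring] at h2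
  rw [← hP, ← hY] at h2
  have h3 := gc_diag (2*(r:ℝ)-(k:ℝ)-2) (r-1)
  rw [show r-1+1 = r by omega, Nat.cast_sub hr] at h3
  push_cast at h3
  rw [show 2*(r:ℝ)-(k:ℝ)-2+1 = 2*(r:ℝ)-(k:ℝ)-1 by ring,
      show (r:ℝ)-1+1 = (r:ℝ) by ring] at h3
  rw [← hQ, ← hV] at h3
  apply mul_right_cancel₀ (mul_ne_zero hden2 hden1)
  linear_combination (8*(r:ℝ)*P*((r:ℝ)-1/4))*h1 + ((4*(r:ℝ)-1)*(2*(r:ℝ)-(k:ℝ)-1)*V)*h2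
    + ((4*(r:ℝ)-1)*P*((k:ℝ)+1))*h3


lemma ApolyC0 (r : ℕ) (z : ℂ) :
    Apoly r 0 z = ∑ m ∈ Finset.range (r+1), ((c10 r m : ℝ) : ℂ) * (-z)^m := by
  unfold Apoly c10; norm_num

lemma ApolyC1 (r : ℕ) (z : ℂ) :
    Apoly r 1 z = ∑ m ∈ Finset.range (r+1), ((c11 r m : ℝ) : ℂ) * (-z)^m := by
  unfold Apoly c11; norm_num

lemma BpolyC0 (r : ℕ) (z : ℂ) :
    Bpoly r 0 z = ∑ m ∈ Finset.range (r+1), ((d0 r m : ℝ) : ℂ) * (-z)^m := by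
  unfold Bpoly d0; norm_num

lemma BpolyC1 (r : ℕ) (hr : 1 ≤ r) (z : ℂ) :
    Bpoly r 1 z = ∑ m ∈ Finset.range r, ((d1 r m : ℝ) : ℂ) * (-z)^m := by
  unfold Bpoly d1
  rw [show r - 1 + 1 = r by omega]
  norm_num

lemma sum_rel (n : ℕ) (c d e : ℕ → ℝ) (α β γ : ℝ) (z : ℂ)
    (h0 : α * c 0 = β * d 0)
    (hs : ∀ k, k < n → α * c (k+1) = β * d (k+1) + γ * e k) :
    (α:ℂ) * ∑ m ∈ Finset.range (n+1), (c m : ℂ) * (-z)^m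
      = (β:ℂ) * ∑ m ∈ Finset.range (n+1), (d m : ℂ) * (-z)^m
        + (γ:ℂ) * (-z) * ∑ k ∈ Finset.range n, (e k : ℂ) * (-z)^k := by
  rw [Finset.mul_sum, Finset.mul_sum]
  rw [Finset.sum_range_succ' (fun m => (α:ℂ) * ((c m : ℂ) * (-z)^m)) n,
      Finset.sum_range_succ' (fun m => (β:ℂ) * ((d m : ℂ) * (-z)^m)) n]
  have h3 : (γ:ℂ) * (-z) * ∑ k ∈ Finset.range n, (e k : ℂ) * (-z)^k
      = ∑ k ∈ Finset.range n, (γ:ℂ) * ((e k : ℂ) * (-z)^(k+1)) := by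
    rw [Finset.mul_sum]; apply Finset.sum_congr rfl; intros; ring
  rw [h3, add_right_comm, ← Finset.sum_add_distrib]
  congr 1
  · apply Finset.sum_congr rfl
    intro k hk
    have hc := hs k (Finset.mem_range.mp hk)
    have hc' : ((α * c (k+1) : ℝ) : ℂ) = ((β * d (k+1) + γ * e k : ℝ) : ℂ) := congrArg (fun x : ℝ => (x:ℂ)) hc
    push_cast at hc'
    linear_combination ((-z)^(k+1)) * hc'
  · have hc' : ((α * c 0 : ℝ) : ℂ) = ((β * d 0 : ℝ) : ℂ) := congrArg (fun x : ℝ => (x:ℂ)) h0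
    push_cast at hc'
    simp only [pow_zero]
    linear_combination hc'

lemma relA1 (r : ℕ) (hr : 1 ≤ r) (z : ℂ) :
    (((r:ℝ)+1 : ℝ) : ℂ) * Apoly (r+1) 1 z
      = ((2*(r:ℝ)+1 : ℝ) : ℂ) * Apoly r 0 z
        + (((4*(r:ℝ)+1)/4 : ℝ) : ℂ) * (-z) * Apoly r 1 z := by
  have ext : ∑ m ∈ Finset.range (r+1+1), ((c10 r m : ℝ) : ℂ) * (-z)^m
      = ∑ m ∈ Finset.range (r+1), ((c10 r m : ℝ) : ℂ) * (-z)^m := by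
    rw [Finset.sum_range_succ, c10_ext r hr]
    simp
  rw [ApolyC1 (r+1) z, ApolyC0 r z, ← ext, ApolyC1 r z]
  exact sum_rel (r+1) (c11 (r+1)) (c10 r) (c11 r) _ _ _ z (K1a r)
    (fun k hk => K1b r k hr (by omega))

lemma relB1 (r : ℕ) (hr : 1 ≤ r) (z : ℂ) :
    (((r:ℝ)+1 : ℝ) : ℂ) * Bpoly (r+1) 1 z
      = ((2*(r:ℝ)+1 : ℝ) : ℂ) * Bpoly r 0 z
        + (((4*(r:ℝ)+1)/4 : ℝ) : ℂ) * (-z) * Bpoly r 1 z := by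
  rw [BpolyC1 (r+1) (by omega) z, BpolyC0 r z, BpolyC1 r hr z]
  exact sum_rel r (d1 (r+1)) (d0 r) (d1 r) _ _ _ z (K1'a r) (fun k _ => K1'b r k)

lemma relA2 (r : ℕ) (hr : 1 ≤ r) (z : ℂ) :
    ((4*(r:ℝ) : ℝ) : ℂ) * Apoly r 0 z
      = ((8*(r:ℝ) : ℝ) : ℂ) * Apoly r 1 z
        + ((4*(r:ℝ)-1 : ℝ) : ℂ) * (-z) * Apoly (r-1) 0 z := by
  have hb := ApolyC0 (r-1) z
  rw [show r-1+1 = r by omega] at hb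
  rw [ApolyC0 r z, ApolyC1 r z, hb]
  exact sum_rel r (c10 r) (c11 r) (c10 (r-1)) _ _ _ z (K2a r hr)
    (fun k hk => K2b r k hr hk)

lemma relB2 (r : ℕ) (hr : 1 ≤ r) (z : ℂ) :
    ((4*(r:ℝ) : ℝ) : ℂ) * Bpoly r 0 z
      = ((8*(r:ℝ) : ℝ) : ℂ) * Bpoly r 1 z
        + ((4*(r:ℝ)-1 : ℝ) : ℂ) * (-z) * Bpoly (r-1) 0 z := by
  have extd : ∑ m ∈ Finset.range (r+1), ((d1 r m : ℝ) : ℂ) * (-z)^m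
      = ∑ m ∈ Finset.range r, ((d1 r m : ℝ) : ℂ) * (-z)^m := by
    have : Finset.range (r+1) = Finset.range (r-1+1+1) := by rw [show r-1+1 = r by omega]
    rw [Finset.sum_range_succ, d1_ext r hr]
    simp
  have hb := BpolyC0 (r-1) z
  rw [show r-1+1 = r by omega] at hb
  rw [BpolyC0 r z, BpolyC1 r hr z, ← extd, hb]
  exact sum_rel r (d0 r) (d1 r) (d0 (r-1)) _ _ _ z (K2'a r hr)
    (fun k hk => K2'b r k hr hk)

lemma base_case (z : ℂ) (hz : z ≠ 0) :
    Apoly 1 0 z * Bpoly 1 1 z - Apoly 1 1 z * Bpoly 1 0 z ≠ 0 := by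
  have hval : Apoly 1 0 z * Bpoly 1 1 z - Apoly 1 1 z * Bpoly 1 0 z = (-3/16 : ℂ) * z^2 := by
    norm_num [Apoly, Bpoly, genChoose, Finset.sum_range_succ, Finset.prod_range_succ]
    ring
  rw [hval]
  exact mul_ne_zero (by norm_num) (pow_ne_zero 2 hz)

lemma step1 (n : ℕ) (hn : 1 ≤ n) (z : ℂ) (hz : z ≠ 0)
    (h0 : Apoly n 0 z * Bpoly n 1 z - Apoly n 1 z * Bpoly n 0 z ≠ 0) :
    Apoly n 0 z * Bpoly (n+1) 1 z - Apoly (n+1) 1 z * Bpoly n 0 z ≠ 0 := by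
  have hA := relA1 n hn z
  have hB := relB1 n hn z
  have e : (((n:ℝ)+1 : ℝ) : ℂ) * (Apoly n 0 z * Bpoly (n+1) 1 z - Apoly (n+1) 1 z * Bpoly n 0 z)
      = (((4*(n:ℝ)+1)/4 : ℝ) : ℂ) * (-z) * (Apoly n 0 z * Bpoly n 1 z - Apoly n 1 z * Bpoly n 0 z) := by
    linear_combination (Apoly n 0 z) * hB - (Bpoly n 0 z) * hA
  intro hcon
  rw [hcon, mul_zero] at e
  have hne : (((4*(n:ℝ)+1)/4 : ℝ) : ℂ) * (-z) *
      (Apoly n 0 z * Bpoly n 1 z - Apoly n 1 z * Bpoly n 0 z) ≠ 0 := by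
    apply mul_ne_zero (mul_ne_zero _ (neg_ne_zero.mpr hz)) h0
    exact Complex.ofReal_ne_zero.mpr (by positivity)
  exact hne e.symm

lemma step2 (n : ℕ) (hn : 1 ≤ n) (z : ℂ) (hz : z ≠ 0)
    (h1 : Apoly n 0 z * Bpoly (n+1) 1 z - Apoly (n+1) 1 z * Bpoly n 0 z ≠ 0) :
    Apoly (n+1) 0 z * Bpoly (n+1) 1 z - Apoly (n+1) 1 z * Bpoly (n+1) 0 z ≠ 0 := by
  have hA := relA2 (n+1) (by omega) z
  have hB := relB2 (n+1) (by omega) z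
  rw [Nat.add_sub_cancel] at hA hB
  have e : ((4*((n:ℝ)+1) : ℝ) : ℂ) *
      (Apoly (n+1) 0 z * Bpoly (n+1) 1 z - Apoly (n+1) 1 z * Bpoly (n+1) 0 z)
      = ((4*((n:ℝ)+1)-1 : ℝ) : ℂ) * (-z) *
        (Apoly n 0 z * Bpoly (n+1) 1 z - Apoly (n+1) 1 z * Bpoly n 0 z) := by
    push_cast at hA hB ⊢
    linear_combination (Bpoly (n+1) 1 z) * hA - (Apoly (n+1) 1 z) * hB
  intro hcon
  rw [hcon, mul_zero] at e
  have hne : ((4*((n:ℝ)+1)-1 : ℝ) : ℂ) * (-z) *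
      (Apoly n 0 z * Bpoly (n+1) 1 z - Apoly (n+1) 1 z * Bpoly n 0 z) ≠ 0 := by
    apply mul_ne_zero (mul_ne_zero _ (neg_ne_zero.mpr hz)) h1
    apply Complex.ofReal_ne_zero.mpr
    have hnn : (0:ℝ) ≤ (n:ℝ) := n.cast_nonneg
    intro hcon2; linarith
  exact hne e.symm

/-- Non-vanishing of the "Wronskian": for `z ≠ 0`,
`A_{r,0}(z) B_{r+h,1}(z) - A_{r+h,1}(z) B_{r,0}(z) ≠ 0`. -/
theorem pade_nonvanishing (r : ℕ) (hr : 0 < r) (h : ℕ) (hh : h = 0 ∨ h = 1)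
    (z : ℂ) (hz : z ≠ 0) :
    Apoly r 0 z * Bpoly (r + h) 1 z - Apoly (r + h) 1 z * Bpoly r 0 z ≠ 0 := by
  have W0all : ∀ n, 1 ≤ n → Apoly n 0 z * Bpoly n 1 z - Apoly n 1 z * Bpoly n 0 z ≠ 0 := by
    intro n hn
    induction n, hn using Nat.le_induction with
    | base => exact base_case z hz
    | succ n hn ih => exact step2 n hn z hz (step1 n hn z hz ih)
  rcases hh with h0 | h1
  · subst h0; simpa using W0all r hr
  · subst h1; exact step1 r hr z hz (W0all r hr)
end

section
/- For every positive integer r, every g ∈ {0,1}, and every complex number z: A_{r,g}(1 − z) = Σ_{m=0}^{r} C(r−1/4, r−m)·C(r−g+1/4, m)·z^m, and B_{r,g}(1 − z) = Σ_{m=0}^{r−g} C(r−g+1/4, r−g−m)·C(r−1/4, m)·z^m. -/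
open Finset

lemma descP_smeval (α : ℝ) (m : ℕ) :
    (descPochhammer ℤ m).smeval α = ∏ i ∈ Finset.range m, (α - i) := by
  induction m with
  | zero => simp
  | succ n ih =>
      rw [descPochhammer_succ_right, Polynomial.smeval_mul, ih, Finset.prod_range_succ]
      congr 1
      simp [Polynomial.smeval_sub, Polynomial.smeval_X, Polynomial.smeval_natCast]

lemma genChoose_eq_ringChoose (α : ℝ) (m : ℕ) : genChoose α m = Ring.choose α m := by
  have h1 := Ring.descPochhammer_eq_factorial_smul_choose α m
  rw [descP_smeval] at h1
  rw [genChoose, h1]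
  field_simp
  exact nsmul_eq_mul _ _

/-- Chu–Vandermonde identity for generalized binomial coefficients. -/
lemma genChoose_vandermonde (α β : ℝ) (n : ℕ) :
    genChoose (α + β) n = ∑ j ∈ Finset.range (n + 1), genChoose α j * genChoose β (n - j) := by
  simp only [genChoose_eq_ringChoose]
  rw [Ring.add_choose_eq n (Commute.all α β), Finset.Nat.sum_antidiagonal_eq_sum_range_succ_mk]

lemma genChoose_neg (α : ℝ) (m : ℕ) :
    genChoose (-α) m = (-1 : ℝ) ^ m * genChoose (α + m - 1) m := by
  unfold genChoose
  have h1 : ∏ i ∈ Finset.range m, (-α - i) = (-1 : ℝ) ^ m * ∏ i ∈ Finset.range m, (α + i) := by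
    have he : ∏ i ∈ Finset.range m, (-α - (i : ℝ)) = ∏ i ∈ Finset.range m, (-1 : ℝ) * (α + i) :=
      Finset.prod_congr rfl (fun i _ => by ring)
    rw [he, Finset.prod_mul_distrib, Finset.prod_const, Finset.card_range]
  have h2 : ∏ i ∈ Finset.range m, (α + (m : ℝ) - 1 - i) = ∏ i ∈ Finset.range m, (α + i) := by
    rw [← Finset.prod_range_reflect (fun i => α + (i : ℝ)) m]
    refine Finset.prod_congr rfl (fun i hi => ?_)
    have hi' : i < m := Finset.mem_range.mp hi
    have hc : ((m - 1 - i : ℕ) : ℝ) = (m : ℝ) - 1 - i := by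
      have h3 : 1 + i ≤ m := by omega
      push_cast [Nat.sub_sub, Nat.cast_sub h3]
      ring
    rw [hc]; ring
  rw [h1, h2]
  ring

lemma genChoose_natCast (N k : ℕ) : genChoose (N : ℝ) k = (N.choose k : ℝ) := by
  have h1 := Polynomial.descPochhammer_smeval_eq_descFactorial (R := ℝ) N k
  rw [descP_smeval] at h1
  rw [genChoose, h1, Nat.descFactorial_eq_factorial_mul_choose]
  field_simp
  exact Nat.cast_mul _ _

/-- Trinomial revision. -/
lemma genChoose_trinomial (α : ℝ) (k j : ℕ) :
    genChoose α (k + j) * ((k + j).choose k : ℝ) = genChoose α k * genChoose (α - k) j := by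
  unfold genChoose
  have hprod : ∏ i ∈ Finset.range (k + j), (α - i) =
      (∏ i ∈ Finset.range k, (α - i)) * ∏ i ∈ Finset.range j, (α - k - i) := by
    rw [Finset.prod_range_add]
    congr 1
    exact Finset.prod_congr rfl (fun i _ => by push_cast; ring)
  have hfac : ((k + j).choose k : ℝ) * k.factorial * j.factorial = (k + j).factorial := by
    have h := Nat.choose_mul_factorial_mul_factorial (Nat.le_add_right k j)
    rw [Nat.add_sub_cancel_left] at h
    exact_mod_cast h
  rw [hprod]
  have hk : (k.factorial : ℝ) ≠ 0 := Nat.cast_ne_zero.mpr k.factorial_ne_zero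
  have hj : (j.factorial : ℝ) ≠ 0 := Nat.cast_ne_zero.mpr j.factorial_ne_zero
  have hkj : ((k + j).factorial : ℝ) ≠ 0 := Nat.cast_ne_zero.mpr (k + j).factorial_ne_zero
  field_simp
  rw [← hfac]
  ring

/-- Key alternating Vandermonde identity. -/
lemma genChoose_key (β : ℝ) (N n : ℕ) :
    ∑ j ∈ Finset.range (n + 1),
      (-1 : ℝ) ^ j * genChoose β j * genChoose ((N : ℝ) - j) (n - j)
      = genChoose ((N : ℝ) - β) n := by
  have hterm : ∀ j ∈ Finset.range (n + 1),
      (-1 : ℝ) ^ j * genChoose β j * genChoose ((N : ℝ) - j) (n - j)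
      = (-1 : ℝ) ^ n * (genChoose β j * genChoose ((n : ℝ) - N - 1) (n - j)) := by
    intro j hj
    have hjn : j ≤ n := Nat.lt_succ_iff.mp (Finset.mem_range.mp hj)
    have h1 : (N : ℝ) - j = -((j : ℝ) - N) := by ring
    have h2 : ((j : ℝ) - N) + ((n - j : ℕ) : ℝ) - 1 = (n : ℝ) - N - 1 := by
      rw [Nat.cast_sub hjn]; ring
    rw [h1, genChoose_neg, h2]
    have h3 : (-1 : ℝ) ^ j * (-1 : ℝ) ^ (n - j) = (-1 : ℝ) ^ n := by
      rw [← pow_add, Nat.add_sub_cancel' hjn]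
    linear_combination (genChoose β j * genChoose ((n : ℝ) - N - 1) (n - j)) * h3
  rw [Finset.sum_congr rfl hterm, ← Finset.mul_sum, ← genChoose_vandermonde]
  have h4 : β + ((n : ℝ) - N - 1) = -(((N : ℝ) - β) - n + 1) := by ring
  rw [h4, genChoose_neg]
  have h5 : ((N : ℝ) - β) - n + 1 + n - 1 = (N : ℝ) - β := by ring
  rw [h5, ← mul_assoc, ← pow_add, Even.neg_one_pow ⟨n, rfl⟩, one_mul]

/-- The coefficient identity, real version. -/
lemma coeffR (α : ℝ) (T s k : ℕ) (hsT : s ≤ T) (hk : k ≤ s) :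
    ∑ m ∈ Finset.range (s + 1),
      genChoose α m * ((T - m).choose (T - s) : ℝ) * ((-1 : ℝ) ^ (m - k) * (m.choose k : ℝ))
      = genChoose ((T : ℝ) - α) (s - k) * genChoose α k := by
  rw [Finset.range_eq_Ico, ← Finset.sum_Ico_consecutive _ (Nat.zero_le k)
    (by omega : k ≤ s + 1)]
  have hzero : ∑ m ∈ Finset.Ico 0 k,
      genChoose α m * ((T - m).choose (T - s) : ℝ) * ((-1 : ℝ) ^ (m - k) * (m.choose k : ℝ))
      = 0 := by
    apply Finset.sum_eq_zero
    intro m hm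
    rw [Nat.choose_eq_zero_of_lt (Finset.mem_Ico.mp hm).2]
    simp
  rw [hzero, zero_add, Finset.sum_Ico_eq_sum_range,
    (by omega : s + 1 - k = (s - k) + 1)]
  have hterm : ∀ j ∈ Finset.range ((s - k) + 1),
      genChoose α (k + j) * ((T - (k + j)).choose (T - s) : ℝ) *
        ((-1 : ℝ) ^ ((k + j) - k) * ((k + j).choose k : ℝ))
      = genChoose α k * ((-1 : ℝ) ^ j * genChoose (α - k) j *
          genChoose (((T - k : ℕ)) - (j : ℝ)) ((s - k) - j)) := by
    intro j hj
    have hjsk : j ≤ s - k := Nat.lt_succ_iff.mp (Finset.mem_range.mp hj)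
    have hkjs : k + j ≤ s := by omega
    have e1 : (k + j) - k = j := by omega
    have e2 : (T - (k + j)).choose (T - s) = (T - (k + j)).choose ((s - k) - j) := by
      rw [← Nat.choose_symm (by omega : T - s ≤ T - (k + j))]
      congr 1
      omega
    have e3 : (((T - k : ℕ)) : ℝ) - (j : ℝ) = ((T - (k + j) : ℕ) : ℝ) := by
      push_cast [Nat.cast_sub (by omega : k ≤ T), Nat.cast_sub (by omega : k + j ≤ T)]
      ring
    rw [e1, e2, e3, genChoose_natCast]
    linear_combination ((-1 : ℝ) ^ j * ((T - (k + j)).choose ((s - k) - j) : ℝ)) *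
      genChoose_trinomial α k j
  rw [Finset.sum_congr rfl hterm, ← Finset.mul_sum]
  have e4 : ∑ j ∈ Finset.range ((s - k) + 1),
      (-1 : ℝ) ^ j * genChoose (α - k) j * genChoose (((T - k : ℕ)) - (j : ℝ)) ((s - k) - j)
      = genChoose (((T - k : ℕ) : ℝ) - (α - k)) (s - k) := genChoose_key (α - k) (T - k) (s - k)
  rw [e4]
  have e5 : (((T - k : ℕ)) : ℝ) - (α - k) = (T : ℝ) - α := by
    push_cast [Nat.cast_sub (by omega : k ≤ T)]
    ring
  rw [e5, mul_comm]

/-- The main expansion lemma over ℂ. -/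
lemma mainC (α : ℝ) (T s : ℕ) (hsT : s ≤ T) (z : ℂ) :
    ∑ m ∈ Finset.range (s + 1),
      ((genChoose α m * ((T - m).choose (T - s) : ℝ) : ℝ) : ℂ) * (-(1 - z)) ^ m
    = ∑ k ∈ Finset.range (s + 1),
      ((genChoose ((T : ℝ) - α) (s - k) * genChoose α k : ℝ) : ℂ) * z ^ k := by
  have hpow : ∀ m : ℕ, (-(1 - z)) ^ m
      = ∑ k ∈ Finset.range (m + 1), z ^ k * (-1 : ℂ) ^ (m - k) * (m.choose k : ℂ) := by
    intro m
    rw [show -(1 - z) = z + (-1) by ring, add_pow]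
  have hext : ∀ m ∈ Finset.range (s + 1), (-(1 - z)) ^ m
      = ∑ k ∈ Finset.range (s + 1), z ^ k * (-1 : ℂ) ^ (m - k) * (m.choose k : ℂ) := by
    intro m hm
    have hms : m ≤ s := Nat.lt_succ_iff.mp (Finset.mem_range.mp hm)
    rw [hpow m]
    apply Finset.sum_subset (Finset.range_subset_range.mpr (by omega))
    intro k _ hk
    have : m < k := by
      have := Finset.mem_range.not.mp hk
      omega
    rw [Nat.choose_eq_zero_of_lt this]
    simp
  calc ∑ m ∈ Finset.range (s + 1),
        ((genChoose α m * ((T - m).choose (T - s) : ℝ) : ℝ) : ℂ) * (-(1 - z)) ^ m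
      = ∑ m ∈ Finset.range (s + 1), ∑ k ∈ Finset.range (s + 1),
        ((genChoose α m * ((T - m).choose (T - s) : ℝ) : ℝ) : ℂ) *
          (z ^ k * (-1 : ℂ) ^ (m - k) * (m.choose k : ℂ)) := by
        refine Finset.sum_congr rfl (fun m hm => ?_)
        rw [hext m hm, Finset.mul_sum]
    _ = ∑ k ∈ Finset.range (s + 1), ∑ m ∈ Finset.range (s + 1),
        ((genChoose α m * ((T - m).choose (T - s) : ℝ) : ℝ) : ℂ) *
          (z ^ k * (-1 : ℂ) ^ (m - k) * (m.choose k : ℂ)) := Finset.sum_comm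
    _ = ∑ k ∈ Finset.range (s + 1),
        ((genChoose ((T : ℝ) - α) (s - k) * genChoose α k : ℝ) : ℂ) * z ^ k := by
        refine Finset.sum_congr rfl (fun k hk => ?_)
        have hks : k ≤ s := Nat.lt_succ_iff.mp (Finset.mem_range.mp hk)
        have hterm : ∀ m ∈ Finset.range (s + 1),
            ((genChoose α m * ((T - m).choose (T - s) : ℝ) : ℝ) : ℂ) *
              (z ^ k * (-1 : ℂ) ^ (m - k) * (m.choose k : ℂ))
            = ((genChoose α m * ((T - m).choose (T - s) : ℝ) *
                ((-1 : ℝ) ^ (m - k) * (m.choose k : ℝ)) : ℝ) : ℂ) * z ^ k := by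
          intro m _
          push_cast
          ring
        rw [Finset.sum_congr rfl hterm, ← Finset.sum_mul]
        congr 1
        rw [← coeffR α T s k hsT hks]
        push_cast
        ring

/-- Expansions of `A_{r,g}` and `B_{r,g}` around `z = 1`:
`A_{r,g}(1-z) = Σ_{m=0}^{r} C(r-1/4, r-m) C(r-g+1/4, m) z^m` and
`B_{r,g}(1-z) = Σ_{m=0}^{r-g} C(r-g+1/4, r-g-m) C(r-1/4, m) z^m`. -/
theorem Apoly_Bpoly_at_one_sub (r : ℕ) (hr : 0 < r) (g : ℕ) (hg : g = 0 ∨ g = 1) (z : ℂ) :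
    Apoly r g (1 - z) = ∑ m ∈ Finset.range (r + 1),
        ((genChoose ((r : ℝ) - 1/4) (r - m) * genChoose ((r : ℝ) - g + 1/4) m : ℝ) : ℂ) * z ^ m ∧
    Bpoly r g (1 - z) = ∑ m ∈ Finset.range (r - g + 1),
        ((genChoose ((r : ℝ) - g + 1/4) (r - g - m) * genChoose ((r : ℝ) - 1/4) m : ℝ) : ℂ) * z ^ m := by
  have hgr : g ≤ r := by rcases hg with h | h <;> omega
  constructor
  · -- A part: T = 2r - g, s = r, α = r - g + 1/4
    have hA := mainC ((r : ℝ) - g + 1/4) (2 * r - g) r (by omega) z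
    rw [Apoly]
    have e1 : ∀ m ∈ Finset.range (r + 1),
        ((genChoose ((r : ℝ) - g + 1/4) m * genChoose (2 * (r : ℝ) - g - m) (r - g) : ℝ) : ℂ)
          * (-(1 - z)) ^ m
        = ((genChoose ((r : ℝ) - g + 1/4) m *
            (((2 * r - g) - m).choose ((2 * r - g) - r) : ℝ) : ℝ) : ℂ) * (-(1 - z)) ^ m := by
      intro m hm
      have hmr : m ≤ r := Nat.lt_succ_iff.mp (Finset.mem_range.mp hm)
      have h1 : 2 * (r : ℝ) - g - m = ((2 * r - g - m : ℕ) : ℝ) := by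
        push_cast [Nat.cast_sub (by omega : m ≤ 2 * r - g), Nat.cast_sub (by omega : g ≤ 2 * r)]
        ring
      rw [h1, genChoose_natCast, (by omega : (2 * r - g) - r = r - g)]
    rw [Finset.sum_congr rfl e1, hA]
    refine Finset.sum_congr rfl (fun m _ => ?_)
    have h2 : (((2 * r - g : ℕ)) : ℝ) - ((r : ℝ) - g + 1/4) = (r : ℝ) - 1/4 := by
      push_cast [Nat.cast_sub (by omega : g ≤ 2 * r)]
      ring
    rw [h2]
  · -- B part: T = 2r - g, s = r - g, α = r - 1/4
    have hB := mainC ((r : ℝ) - 1/4) (2 * r - g) (r - g) (by omega) z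
    rw [Bpoly]
    have e1 : ∀ m ∈ Finset.range (r - g + 1),
        ((genChoose ((r : ℝ) - 1/4) m * genChoose (2 * (r : ℝ) - g - m) r : ℝ) : ℂ)
          * (-(1 - z)) ^ m
        = ((genChoose ((r : ℝ) - 1/4) m *
            (((2 * r - g) - m).choose ((2 * r - g) - (r - g)) : ℝ) : ℝ) : ℂ) * (-(1 - z)) ^ m := by
      intro m hm
      have hmr : m ≤ r - g := Nat.lt_succ_iff.mp (Finset.mem_range.mp hm)
      have h1 : 2 * (r : ℝ) - g - m = ((2 * r - g - m : ℕ) : ℝ) := by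
        push_cast [Nat.cast_sub (by omega : m ≤ 2 * r - g), Nat.cast_sub (by omega : g ≤ 2 * r)]
        ring
      rw [h1, genChoose_natCast, (by omega : (2 * r - g) - (r - g) = r)]
    rw [Finset.sum_congr rfl e1, hB]
    refine Finset.sum_congr rfl (fun m _ => ?_)
    have h2 : (((2 * r - g : ℕ)) : ℝ) - ((r : ℝ) - 1/4) = (r : ℝ) - g + 1/4 := by
      push_cast [Nat.cast_sub (by omega : g ≤ 2 * r)]
      ring
    rw [h2]
end
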